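/- Consider the heterogeneous reverse firework process on ℕ. Then ∑_{k≥1} (1 − G_{N_{n+k}}(P(R_{n+k} < k))) = +∞ for all n ∈ ℕ if and only if the quenched survival probability P(S | 𝒩 = n) equals 1 for μ-almost every environment n. -/

import Mathlib

open MeasureTheory ProbabilityTheory Filter Set
open scoped ENNReal NNReal
open scoped Topology

noncomputable section

/-- The effective radius at vertex `i`: `0` if there are no stations at `i`, and the maximum
of the radii of the stations at `i` otherwise. -/
def effRadius (station : ℕ → ℕ) (r : ℕ → ℕ → ℝ) (i : ℕ) : ℝ :=
  if h : station i = 0 then 0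
  else (Finset.range (station i)).sup'
    (by simpa [Finset.nonempty_range_iff] using h) (r i)

/-- The set of activated vertices of the reverse firework process on `ℕ`:
the origin `0` is always active, and `m ≥ 1` is active iff there is an active vertex
`i < m` such that the effective radius at `m` is at least `m - i`. -/
inductive ReverseActive (station : ℕ → ℕ) (r : ℕ → ℕ → ℝ) : ℕ → Prop
  | zero : ReverseActive station r 0
  | step (i m : ℕ) : i < m → ReverseActive station r i →
      ((m : ℝ) - (i : ℝ) ≤ effRadius station r m) → ReverseActive station r m

/-- Survival of the reverse firework process: infinitely many vertices are activated. -/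
def reverseSurvives (station : ℕ → ℕ) (r : ℕ → ℕ → ℝ) : Prop :=
  {m : ℕ | ReverseActive station r m}.Infinite

/-- The probability generating function `G(t) = E[t^N]` of a law on `ℕ`. -/
def pgf (PN : Measure ℕ) (t : ℝ) : ℝ :=
  ∑' k : ℕ, (PN {k}).toReal * t ^ k

lemma effRadius_lt_iff {stn : ℕ → ℕ} {r : ℕ → ℕ → ℝ} {m : ℕ} {c : ℝ} (hc : 0 < c) :
    effRadius stn r m < c ↔ ∀ j < stn m, r m j < c := by
  unfold effRadius
  split_ifs with h
  · simp [h, hc]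
  · rw [Finset.sup'_lt_iff]
    constructor
    · intro H j hj; exact H j (Finset.mem_range.2 hj)
    · intro H j hj; exact H j (Finset.mem_range.1 hj)

lemma reverseSurvives_iff (stn : ℕ → ℕ) (r : ℕ → ℕ → ℝ) :
    reverseSurvives stn r ↔
      ∀ n : ℕ, ∃ k : ℕ, ((k : ℝ) + 1) ≤ effRadius stn r (n + k + 1) := by
  constructor
  · intro h n
    obtain ⟨m, hm, hnm⟩ : ∃ m ∈ {m : ℕ | ReverseActive stn r m}, n < m := by
      by_contra hb
      push_neg at hb
      exact h (Set.Finite.subset (Set.finite_Iic n) (fun x hx => hb x hx))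
    clear h
    induction m using Nat.strong_induction_on with
    | _ m IH =>
      cases hm with
      | zero => omega
      | step i m hi hact hrad =>
        by_cases hin : n < i
        · exact IH i hi hact hin
        · refine ⟨m - n - 1, ?_⟩
          have hm1 : n + (m - n - 1) + 1 = m := by omega
          rw [hm1]
          refine le_trans ?_ hrad
          have h1 : ((m - n - 1 : ℕ) : ℝ) = (m : ℝ) - n - 1 := by
            rw [Nat.cast_sub (show 1 ≤ m - n by omega), Nat.cast_sub (show n ≤ m by omega)]
            ring
          have h2 : (i : ℝ) ≤ n := by exact_mod_cast (show i ≤ n by omega)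
          rw [h1]; linarith
  · intro H
    have key : ∀ j : ℕ, ∃ m, j ≤ m ∧ ReverseActive stn r m := by
      intro j
      induction j with
      | zero => exact ⟨0, le_rfl, ReverseActive.zero⟩
      | succ j IH =>
        obtain ⟨m, hjm, hact⟩ := IH
        obtain ⟨k, hk⟩ := H m
        refine ⟨m + k + 1, by omega, ?_⟩
        exact ReverseActive.step m (m + k + 1) (by omega) hact
          (by push_cast; linarith [hk])
    apply Set.infinite_of_forall_exists_gt
    intro a
    obtain ⟨m, ham, hact⟩ := key (a + 1)
    exact ⟨m, hact, by omega⟩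


lemma prod_tendsto_zero_iff {g : ℕ → ℝ} (h0 : ∀ k, 0 < g k) (h1 : ∀ k, g k ≤ 1) :
    Tendsto (fun K => ∏ k ∈ Finset.range K, g k) atTop (𝓝 0) ↔
      ¬ Summable (fun k => 1 - g k) := by
  have hexp : ∀ K, ∏ k ∈ Finset.range K, g k
      = Real.exp (∑ k ∈ Finset.range K, Real.log (g k)) := by
    intro K
    rw [Real.exp_sum]
    exact Finset.prod_congr rfl fun k _ => (Real.exp_log (h0 k)).symm
  have hL : ∀ k, 0 ≤ -Real.log (g k) := by
    intro k
    simp only [neg_nonneg]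
    exact Real.log_nonpos (h0 k).le (h1 k)
  have step1 : Tendsto (fun K => ∏ k ∈ Finset.range K, g k) atTop (𝓝 0) ↔
      Tendsto (fun K => ∑ k ∈ Finset.range K, -Real.log (g k)) atTop atTop := by
    simp only [hexp]
    rw [Real.tendsto_exp_comp_nhds_zero]
    rw [show (fun K => ∑ k ∈ Finset.range K, Real.log (g k))
        = (fun K => -∑ k ∈ Finset.range K, -Real.log (g k)) by
      funext K; rw [← Finset.sum_neg_distrib]; simp]
    exact tendsto_neg_atBot_iff (f := fun K => ∑ k ∈ Finset.range K, -Real.log (g k))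
  rw [step1, ← not_summable_iff_tendsto_nat_atTop_of_nonneg hL]
  constructor
  · intro hns hs
    apply hns
    -- Summable (1 - g) → Summable (-log g)
    have hg1 : Tendsto (fun k => 1 - g k) atTop (𝓝 0) := hs.tendsto_atTop_zero
    have hev : ∀ᶠ k in atTop, -Real.log (g k) ≤ 2 * (1 - g k) := by
      filter_upwards [hg1.eventually (gt_mem_nhds (by norm_num : (0:ℝ) < 1/2))] with k hk
      have hgk : (1:ℝ)/2 ≤ g k := by linarith
      have hlog : Real.log ((g k)⁻¹) ≤ (g k)⁻¹ - 1 :=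
        Real.log_le_sub_one_of_pos (inv_pos.2 (h0 k))
      rw [Real.log_inv] at hlog
      have h2 : (g k)⁻¹ - 1 = (1 - g k) / g k := by
        field_simp
      rw [h2] at hlog
      refine le_trans hlog ?_
      rw [div_le_iff₀ (h0 k)]
      nlinarith [h1 k]
    obtain ⟨K0, hK0⟩ := eventually_atTop.1 hev
    rw [← summable_nat_add_iff K0]
    apply Summable.of_nonneg_of_le (fun k => hL _) (fun k => hK0 _ (by omega))
    exact ((summable_nat_add_iff K0).2 (hs.mul_left 2))
  · intro hns hs
    apply hns
    exact Summable.of_nonneg_of_le (fun k => by linarith [h1 k])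
      (fun k => by linarith [Real.log_le_sub_one_of_pos (h0 k)]) hs


lemma ennreal_tendsto_zero_iff_toReal {A : ℕ → ℝ≥0∞} (hA : ∀ K, A K ≠ ∞) :
    Tendsto A atTop (𝓝 0) ↔ Tendsto (fun K => (A K).toReal) atTop (𝓝 0) := by
  constructor
  · intro h
    have := (ENNReal.tendsto_toReal (a := 0) (by simp)).comp h
    exact this
  · intro h
    have h2 := ENNReal.tendsto_ofReal (f := atTop) h
    rw [ENNReal.ofReal_zero] at h2
    convert h2 using 1
    funext K
    exact (ENNReal.ofReal_toReal (hA K)).symm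

lemma ennreal_iInf_prod_eq_zero_iff {I : ℕ → ℝ≥0∞} (hI : ∀ k, I k ≤ 1) :
    (⨅ K, ∏ k ∈ Finset.range K, I k) = 0 ↔
      Tendsto (fun K => ∏ k ∈ Finset.range K, I k) atTop (𝓝 0) := by
  have h_anti : Antitone (fun K => ∏ k ∈ Finset.range K, I k) := by
    apply antitone_nat_of_succ_le
    intro K
    rw [Finset.prod_range_succ]
    calc (∏ k ∈ Finset.range K, I k) * I K ≤ (∏ k ∈ Finset.range K, I k) * 1 :=
          mul_le_mul_right (hI K) _
      _ = _ := mul_one _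
  have ht := tendsto_atTop_iInf h_anti
  constructor
  · intro h; rwa [h] at ht
  · intro h; exact tendsto_nhds_unique ht h

lemma measurableSet_effRadius_lt (stn : ℕ → ℕ) (m : ℕ) {c : ℝ} (hc : 0 < c) :
    MeasurableSet {r : ℕ → ℕ → ℝ | effRadius stn r m < c} := by
  have : {r : ℕ → ℕ → ℝ | effRadius stn r m < c}
      = ⋂ j ∈ Finset.range (stn m), (fun r : ℕ → ℕ → ℝ => r m j) ⁻¹' (Set.Iio c) := by
    ext r
    simp [effRadius_lt_iff hc]
  rw [this]
  exact MeasurableSet.biInter (Finset.range (stn m)).countable_toSet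
    (fun j _ => (((measurable_pi_apply j).comp (measurable_pi_apply m))) measurableSet_Iio)


lemma quenched_prod (PRs : ℕ → Measure ℝ) (ν : Measure (ℕ → ℕ → ℝ))
    [IsProbabilityMeasure ν]
    (hRlaw : ∀ p : ℕ × ℕ, 1 ≤ p.1 → ν.map (fun r => r p.1 p.2) = PRs p.1)
    (hRindep : iIndepFun
      (fun (p : ℕ × ℕ) (r : ℕ → ℕ → ℝ) => r p.1 p.2) ν)
    (stn : ℕ → ℕ) (n K : ℕ) :
    ν {r | ∀ k < K, effRadius stn r (n + k + 1) < (k : ℝ) + 1}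
      = ∏ k ∈ Finset.range K,
          (PRs (n + k + 1) (Set.Iio ((k : ℝ) + 1))) ^ (stn (n + k + 1)) := by
  classical
  set c : ℕ → ℝ := fun m => ((m - n : ℕ) : ℝ) with hc
  have hcval : ∀ k : ℕ, c (n + k + 1) = (k : ℝ) + 1 := by
    intro k
    simp only [hc]
    have : n + k + 1 - n = k + 1 := by omega
    rw [this]; push_cast; ring
  set T : Finset (ℕ × ℕ) := (Finset.range K).biUnion
    (fun k => {n + k + 1} ×ˢ Finset.range (stn (n + k + 1))) with hT
  set A : ℕ × ℕ → Set (ℕ → ℕ → ℝ) :=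
    fun q => (fun r : ℕ → ℕ → ℝ => r q.1 q.2) ⁻¹' (Set.Iio (c q.1)) with hA
  have hmemT : ∀ q : ℕ × ℕ, q ∈ T ↔
      ∃ k < K, q.1 = n + k + 1 ∧ q.2 < stn (n + k + 1) := by
    intro q
    simp only [hT, Finset.mem_biUnion, Finset.mem_range, Finset.mem_product,
      Finset.mem_singleton]
  have hset : {r : ℕ → ℕ → ℝ | ∀ k < K, effRadius stn r (n + k + 1) < (k : ℝ) + 1}
      = ⋂ q ∈ T, A q := by
    ext r
    simp only [Set.mem_setOf_eq, Set.mem_iInter, hA, Set.mem_preimage, Set.mem_Iio]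
    constructor
    · intro h q hq
      obtain ⟨k, hk, h1, h2⟩ := (hmemT q).1 hq
      obtain ⟨q1, q2⟩ := q
      simp only at h1 h2 ⊢
      subst h1
      rw [hcval k]
      exact (effRadius_lt_iff (by positivity)).1 (h k hk) q2 h2
    · intro h k hk
      rw [effRadius_lt_iff (by positivity)]
      intro j hj
      have := h (n + k + 1, j) ((hmemT _).2 ⟨k, hk, rfl, hj⟩)
      rwa [hcval k] at this
  have hmeas : ∀ q : ℕ × ℕ, Measurable (fun r : ℕ → ℕ → ℝ => r q.1 q.2) :=
    fun q => (measurable_pi_apply q.2).comp (measurable_pi_apply q.1)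
  have hprod : ν (⋂ q ∈ T, A q) = ∏ q ∈ T, ν (A q) := by
    apply hRindep.meas_biInter
    intro q _
    exact ⟨Set.Iio (c q.1), measurableSet_Iio, rfl⟩
  have hAval : ∀ q : ℕ × ℕ, 1 ≤ q.1 → ν (A q) = PRs q.1 (Set.Iio (c q.1)) := by
    intro q hq
    rw [hA]
    rw [← Measure.map_apply (hmeas q) measurableSet_Iio, hRlaw q hq]
  rw [hset, hprod, hT]
  rw [Finset.prod_biUnion]
  · apply Finset.prod_congr rfl
    intro k hk
    rw [Finset.singleton_product, Finset.prod_map]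
    have : ∀ j ∈ Finset.range (stn (n + k + 1)),
        ν (A ((n + k + 1 : ℕ), j)) = PRs (n + k + 1) (Set.Iio ((k : ℝ) + 1)) := by
      intro j _
      rw [hAval ((n + k + 1 : ℕ), j) (by omega)]
      simp only
      rw [hcval k]
    simp only [Function.Embedding.coeFn_mk]
    rw [Finset.prod_congr rfl this, Finset.prod_const, Finset.card_range]
  · intro k _ k' _ hkk'
    simp only [Function.onFun]
    rw [Finset.disjoint_left]
    intro q hq hq'
    rw [Finset.mem_product, Finset.mem_singleton] at hq hq'
    omega


lemma quenched_survival_iff (PRs : ℕ → Measure ℝ) (ν : Measure (ℕ → ℕ → ℝ))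
    [IsProbabilityMeasure ν]
    (hRlaw : ∀ p : ℕ × ℕ, 1 ≤ p.1 → ν.map (fun r => r p.1 p.2) = PRs p.1)
    (hRindep : iIndepFun
      (fun (p : ℕ × ℕ) (r : ℕ → ℕ → ℝ) => r p.1 p.2) ν)
    (stn : ℕ → ℕ) :
    ν {r | reverseSurvives stn r} = 1 ↔
      ∀ n : ℕ, Tendsto (fun K => ∏ k ∈ Finset.range K,
        (PRs (n + k + 1) (Set.Iio ((k : ℝ) + 1))) ^ (stn (n + k + 1))) atTop (𝓝 0) := by
  classical
  set E : ℕ → ℕ → Set (ℕ → ℕ → ℝ) :=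
    fun n k => {r | (k : ℝ) + 1 ≤ effRadius stn r (n + k + 1)} with hE
  have hEmeas : ∀ n k, MeasurableSet (E n k) := by
    intro n k
    have : E n k = {r : ℕ → ℕ → ℝ | effRadius stn r (n + k + 1) < (k : ℝ) + 1}ᶜ := by
      ext r; simp [hE, not_lt]
    rw [this]
    exact (measurableSet_effRadius_lt stn _ (by positivity)).compl
  set U : ℕ → Set (ℕ → ℕ → ℝ) := fun n => ⋃ k, E n k with hU
  have hUmeas : ∀ n, MeasurableSet (U n) := fun n => MeasurableSet.iUnion (fun k => hEmeas n k)
  have hsurv : {r : ℕ → ℕ → ℝ | reverseSurvives stn r} = ⋂ n, U n := by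
    ext r
    simp only [Set.mem_setOf_eq, reverseSurvives_iff, hU, hE, Set.mem_iInter, Set.mem_iUnion]
  set C : ℕ → ℕ → Set (ℕ → ℕ → ℝ) :=
    fun n K => {r | ∀ k < K, effRadius stn r (n + k + 1) < (k : ℝ) + 1} with hC
  have hCmeas : ∀ n K, MeasurableSet (C n K) := by
    intro n K
    have : C n K = ⋂ k ∈ Finset.range K,
        {r : ℕ → ℕ → ℝ | effRadius stn r (n + k + 1) < (k : ℝ) + 1} := by
      ext r; simp [hC]
    rw [this]
    exact MeasurableSet.biInter (Finset.range K).countable_toSet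
      (fun k _ => measurableSet_effRadius_lt stn _ (by positivity))
  have hUcompl : ∀ n, (U n)ᶜ = ⋂ K, C n K := by
    intro n
    ext r
    simp only [hU, hE, Set.compl_iUnion, Set.mem_iInter, Set.mem_compl_iff,
      Set.mem_setOf_eq, not_le, hC]
    constructor
    · intro h K k _; exact h k
    · intro h k; exact h (k + 1) k (Nat.lt_succ_self k)
  have key : ∀ n, ν (U n) = 1 ↔ Tendsto (fun K => ∏ k ∈ Finset.range K,
      (PRs (n + k + 1) (Set.Iio ((k : ℝ) + 1))) ^ (stn (n + k + 1))) atTop (𝓝 0) := by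
    intro n
    have hanti : Antitone (C n) := by
      intro K K' hKK' r hr k hk
      exact hr k (lt_of_lt_of_le hk hKK')
    have htend := tendsto_measure_iInter_atTop (μ := ν)
      (fun K => (hCmeas n K).nullMeasurableSet) hanti ⟨0, measure_ne_top ν _⟩
    rw [← hUcompl n] at htend
    have hfeq : (ν ∘ C n) = fun K => ∏ k ∈ Finset.range K,
        (PRs (n + k + 1) (Set.Iio ((k : ℝ) + 1))) ^ (stn (n + k + 1)) := by
      funext K
      exact quenched_prod PRs ν hRlaw hRindep stn n K
    rw [hfeq] at htend
    rw [← prob_compl_eq_zero_iff (hUmeas n)]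
    constructor
    · intro h; rwa [h] at htend
    · intro h; exact tendsto_nhds_unique htend h
  rw [hsurv]
  constructor
  · intro h n
    rw [← key n]
    refine le_antisymm (prob_le_one) ?_
    rw [← h]
    exact measure_mono (Set.iInter_subset _ n)
  · intro h
    rw [← prob_compl_eq_zero_iff (MeasurableSet.iInter hUmeas)]
    rw [Set.compl_iInter]
    refine measure_iUnion_null_iff.2 (fun n => ?_)
    rw [prob_compl_eq_zero_iff (hUmeas n)]
    exact (key n).2 (h n)


lemma single_lintegral (PNs : ℕ → Measure ℕ) (μ : Measure (ℕ → ℕ))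
    (hNlaw : ∀ i : ℕ, 1 ≤ i → μ.map (fun f => f i) = PNs i)
    (c : ℝ≥0∞) (m : ℕ) (hm : 1 ≤ m) :
    ∫⁻ stn, c ^ stn m ∂μ = ∑' j : ℕ, c ^ j * PNs m {j} := by
  have h1 : ∫⁻ stn, c ^ stn m ∂μ = ∫⁻ x, c ^ x ∂(μ.map (fun f => f m)) := by
    rw [lintegral_map measurable_from_nat (measurable_pi_apply m)]
  rw [h1, hNlaw m hm, lintegral_countable']

lemma annealed_prod (PNs : ℕ → Measure ℕ) (μ : Measure (ℕ → ℕ))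
    [IsProbabilityMeasure μ]
    (hNindep : iIndepFun (fun (i : ℕ) (f : ℕ → ℕ) => f i) μ)
    (c : ℕ → ℝ≥0∞) (n : ℕ) :
    ∀ K : ℕ, ∫⁻ stn, ∏ k ∈ Finset.range K, c (n + k + 1) ^ stn (n + k + 1) ∂μ
      = ∏ k ∈ Finset.range K, ∫⁻ stn, c (n + k + 1) ^ stn (n + k + 1) ∂μ := by
  classical
  set F : ℕ → (ℕ → ℕ) → ℝ≥0∞ := fun m stn => c m ^ stn m with hF
  have hFmeas : ∀ m, Measurable (F m) :=
    fun m => (measurable_from_nat (f := fun j : ℕ => c m ^ j)).comp (measurable_pi_apply m)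
  have hFindep : iIndepFun F μ :=
    hNindep.comp (fun m (j : ℕ) => c m ^ j) (fun m => measurable_from_nat)
  intro K
  induction K with
  | zero => simp
  | succ K IH =>
    have hinj : ∀ x ∈ Finset.range K, ∀ y ∈ Finset.range K,
        n + x + 1 = n + y + 1 → x = y := by
      intro a _ b _ h; omega
    have hnot : n + K + 1 ∉ (Finset.range K).image (fun k => n + k + 1) := by
      simp only [Finset.mem_image, Finset.mem_range]
      rintro ⟨k, hk, hkeq⟩; omega
    have hindep : IndepFun (∏ j ∈ (Finset.range K).image (fun k => n + k + 1), F j)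
        (F (n + K + 1)) μ :=
      hFindep.indepFun_finsetProd_of_notMem hFmeas hnot
    have hprodeq : (∏ j ∈ (Finset.range K).image (fun k => n + k + 1), F j)
        = fun stn : ℕ → ℕ => ∏ k ∈ Finset.range K, c (n + k + 1) ^ stn (n + k + 1) := by
      funext stn
      rw [Finset.prod_apply]
      exact Finset.prod_image hinj
    rw [hprodeq] at hindep
    have hmeas1 : Measurable (fun stn : ℕ → ℕ => ∏ k ∈ Finset.range K,
        c (n + k + 1) ^ stn (n + k + 1)) :=
      Finset.measurable_prod _ (fun k _ => hFmeas (n + k + 1))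
    calc ∫⁻ stn, ∏ k ∈ Finset.range (K + 1), c (n + k + 1) ^ stn (n + k + 1) ∂μ
        = ∫⁻ stn, (∏ k ∈ Finset.range K, c (n + k + 1) ^ stn (n + k + 1))
            * (c (n + K + 1) ^ stn (n + K + 1)) ∂μ := by
          congr 1; funext stn; rw [Finset.prod_range_succ]
      _ = (∫⁻ stn, ∏ k ∈ Finset.range K, c (n + k + 1) ^ stn (n + k + 1) ∂μ)
            * ∫⁻ stn, c (n + K + 1) ^ stn (n + K + 1) ∂μ :=
          lintegral_mul_eq_lintegral_mul_lintegral_of_indepFun hmeas1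
            (hFmeas (n + K + 1)) hindep
      _ = ∏ k ∈ Finset.range (K + 1), ∫⁻ stn, c (n + k + 1) ^ stn (n + k + 1) ∂μ := by
          rw [Finset.prod_range_succ, IH]


lemma ennreal_prod_antitone {I : ℕ → ℝ≥0∞} (hI : ∀ k, I k ≤ 1) :
    Antitone (fun K => ∏ k ∈ Finset.range K, I k) := by
  apply antitone_nat_of_succ_le
  intro K
  rw [Finset.prod_range_succ]
  calc (∏ k ∈ Finset.range K, I k) * I K ≤ (∏ k ∈ Finset.range K, I k) * 1 :=
        mul_le_mul_right (hI K) _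
    _ = _ := mul_one _

lemma prob_nat_tsum (PN : Measure ℕ) [IsProbabilityMeasure PN] :
    ∑' j : ℕ, PN {j} = 1 := by
  have h : (⋃ j : ℕ, ({j} : Set ℕ)) = Set.univ := by ext x; simp
  rw [← measure_univ (μ := PN), ← h,
    measure_iUnion (fun i j hij => Set.disjoint_singleton.2 hij)
      (fun j => measurableSet_singleton j)]


/-- **Theorem (reverse firework, heterogeneous, part 1)**:
`∑_{k≥1} (1 − G_{N_{n+k}}(P(R_{n+k} < k))) = +∞` for all `n ∈ ℕ` if and only if the quenched
survival probability equals `1` for `μ`-almost every environment. -/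
theorem heterogeneous_reverse_firework_as_survival_iff
    (PNs : ℕ → Measure ℕ) (PRs : ℕ → Measure ℝ)
    [∀ i, IsProbabilityMeasure (PNs i)] [∀ i, IsProbabilityMeasure (PRs i)]
    (μ : Measure (ℕ → ℕ)) (ν : Measure (ℕ → ℕ → ℝ))
    [IsProbabilityMeasure μ] [IsProbabilityMeasure ν]
    -- the station numbers at the vertices `i ≥ 1` are independent, `N_i` with law `PNs i`
    (hNlaw : ∀ i : ℕ, 1 ≤ i → μ.map (fun f => f i) = PNs i)
    (hNindep : iIndepFun (fun (i : ℕ) (f : ℕ → ℕ) => f i) μ)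
    -- the radii at the vertices `i ≥ 1` are independent, `R_{i,j}` with law `PRs i`
    (hRlaw : ∀ p : ℕ × ℕ, 1 ≤ p.1 → ν.map (fun r => r p.1 p.2) = PRs p.1)
    (hRindep : iIndepFun
      (fun (p : ℕ × ℕ) (r : ℕ → ℕ → ℝ) => r p.1 p.2) ν)
    -- the radii take values in `[0, ∞)` and `P(R_i < 1) ∈ (0,1)` for every `i ≥ 1`
    (hRnonneg : ∀ i : ℕ, 1 ≤ i → PRs i (Set.Iio (0 : ℝ)) = 0)
    (hR1 : ∀ i : ℕ, 1 ≤ i → 0 < PRs i (Set.Iio (1 : ℝ)) ∧ PRs i (Set.Iio (1 : ℝ)) < 1) :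
    (∀ n : ℕ, ¬ Summable (fun k : ℕ =>
        1 - pgf (PNs (n + k + 1)) ((PRs (n + k + 1) (Set.Iio ((k : ℝ) + 1))).toReal))) ↔
      ∀ᵐ stn ∂μ, ν {r | reverseSurvives stn r} = 1 := by
  classical
  set p : ℕ → ℕ → ℝ≥0∞ := fun n k => PRs (n + k + 1) (Set.Iio ((k : ℝ) + 1)) with hp
  have hp_le_one : ∀ n k, p n k ≤ 1 := fun n k => prob_le_one
  have hp_ne_top : ∀ n k, p n k ≠ ∞ := fun n k => lt_of_le_of_lt (hp_le_one n k)
    ENNReal.one_lt_top |>.ne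
  have hp_pos : ∀ n k, p n k ≠ 0 := by
    intro n k
    have h1 := (hR1 (n + k + 1) (by omega)).1
    have h2 : PRs (n + k + 1) (Set.Iio (1 : ℝ)) ≤ p n k :=
      measure_mono (Set.Iio_subset_Iio (by have := Nat.cast_nonneg (α := ℝ) k; linarith))
    exact (lt_of_lt_of_le h1 h2).ne'
  set I : ℕ → ℕ → ℝ≥0∞ := fun n k => ∑' j : ℕ, (p n k) ^ j * PNs (n + k + 1) {j} with hI
  have hI_le_one : ∀ n k, I n k ≤ 1 := by
    intro n k
    calc I n k ≤ ∑' j : ℕ, 1 * PNs (n + k + 1) {j} :=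
          ENNReal.tsum_le_tsum (fun j =>
            mul_le_mul_left (pow_le_one' (hp_le_one n k) j) _)
      _ = 1 := by simp [prob_nat_tsum]
  have hI_ne_top : ∀ n k, I n k ≠ ∞ :=
    fun n k => (lt_of_le_of_lt (hI_le_one n k) ENNReal.one_lt_top).ne
  have hI_pos : ∀ n k, I n k ≠ 0 := by
    intro n k h0
    rw [hI] at h0
    simp only [ENNReal.tsum_eq_zero] at h0
    have hz : ∀ j : ℕ, PNs (n + k + 1) {j} = 0 := by
      intro j
      have := h0 j
      rcases mul_eq_zero.1 this with h | h
      · exact absurd h (pow_ne_zero j (hp_pos n k))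
      · exact h
    have := prob_nat_tsum (PNs (n + k + 1))
    rw [tsum_congr (fun j => hz j)] at this
    simp at this
  have hIReal : ∀ n k, (I n k).toReal = pgf (PNs (n + k + 1)) ((p n k).toReal) := by
    intro n k
    rw [hI]
    rw [ENNReal.tsum_toReal_eq (fun j => ENNReal.mul_ne_top
      (ENNReal.pow_ne_top (hp_ne_top n k)) (measure_ne_top _ _))]
    unfold pgf
    apply tsum_congr
    intro j
    rw [ENNReal.toReal_mul, ENNReal.toReal_pow, mul_comm]
  have hsingle : ∀ n k, ∫⁻ stn, (p n k) ^ (stn (n + k + 1)) ∂μ = I n k := by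
    intro n k
    exact single_lintegral PNs μ hNlaw (p n k) (n + k + 1) (by omega)
  -- rewrite the right-hand side using the quenched characterization
  have hq : ∀ stn : ℕ → ℕ, (ν {r | reverseSurvives stn r} = 1 ↔
      ∀ n : ℕ, (⨅ K : ℕ, ∏ k ∈ Finset.range K, (p n k) ^ (stn (n + k + 1))) = 0) := by
    intro stn
    rw [quenched_survival_iff PRs ν hRlaw hRindep stn]
    apply forall_congr'
    intro n
    rw [ennreal_iInf_prod_eq_zero_iff
      (fun k => pow_le_one' (hp_le_one n k) _)]
  rw [eventually_congr (Eventually.of_forall hq)]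
  rw [ae_all_iff]
  -- per-n reduction on the annealed side
  apply forall_congr'
  intro n
  set H : ℕ → (ℕ → ℕ) → ℝ≥0∞ :=
    fun K stn => ∏ k ∈ Finset.range K, (p n k) ^ (stn (n + k + 1)) with hH
  have hHmeas : ∀ K, Measurable (H K) := by
    intro K
    apply Finset.measurable_prod
    intro k _
    exact (measurable_from_nat (f := fun j : ℕ => (p n k) ^ j)).comp
      (measurable_pi_apply (n + k + 1))
  have hHanti : Antitone H := by
    intro K K' hKK' stn
    exact ennreal_prod_antitone (fun k => pow_le_one' (hp_le_one n k) _) hKK'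
  have hHinf_meas : Measurable (fun stn => ⨅ K, H K stn) :=
    Measurable.iInf (fun K => hHmeas K)
  -- integral of the infimum
  have hlint : ∫⁻ stn, ⨅ K, H K stn ∂μ = ⨅ K, ∏ k ∈ Finset.range K, I n k := by
    rw [lintegral_iInf hHmeas hHanti]
    · apply iInf_congr
      intro K
      set cg : ℕ → ℝ≥0∞ := fun m => PRs m (Set.Iio (((m - n : ℕ) : ℝ))) with hcg
      have hcgp : ∀ k : ℕ, cg (n + k + 1) = p n k := by
        intro k
        rw [hcg, hp]
        simp only
        congr 1
        have : n + k + 1 - n = k + 1 := by omega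
        rw [this]; push_cast; ring
      have h1 : H K = fun stn => ∏ k ∈ Finset.range K, cg (n + k + 1) ^ stn (n + k + 1) := by
        funext stn
        exact Finset.prod_congr rfl (fun k _ => by rw [hcgp k])
      rw [h1, annealed_prod PNs μ hNindep cg n K]
      apply Finset.prod_congr rfl
      intro k _
      rw [show (fun stn : ℕ → ℕ => cg (n + k + 1) ^ stn (n + k + 1))
          = fun stn : ℕ → ℕ => (p n k) ^ stn (n + k + 1) by
        funext stn; rw [hcgp k]]
      exact hsingle n k
    · rw [show H 0 = fun _ => 1 by funext stn; simp [hH]]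
      simp
  -- put the two sides together
  constructor
  · intro hsum
    have hzero : ∫⁻ stn, ⨅ K, H K stn ∂μ = 0 := by
      rw [hlint]
      rw [ennreal_iInf_prod_eq_zero_iff (fun k => hI_le_one n k)]
      rw [ennreal_tendsto_zero_iff_toReal
        (fun K => ENNReal.prod_ne_top (fun k _ => hI_ne_top n k))]
      have htr : (fun K => (∏ k ∈ Finset.range K, I n k).toReal)
          = fun K => ∏ k ∈ Finset.range K, (I n k).toReal := by
        funext K; exact ENNReal.toReal_prod _ _
      rw [htr]
      rw [prod_tendsto_zero_iff (fun k => ?_) (fun k => ?_)]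
      · intro hcon
        apply hsum
        have : (fun k : ℕ => 1 - pgf (PNs (n + k + 1))
            ((PRs (n + k + 1) (Set.Iio ((k : ℝ) + 1))).toReal))
            = fun k => 1 - (I n k).toReal := by
          funext k; rw [hIReal n k]
        rw [this]
        exact hcon
      · exact ENNReal.toReal_pos (hI_pos n k) (hI_ne_top n k)
      · exact ENNReal.toReal_le_of_le_ofReal zero_le_one (by simpa using hI_le_one n k)
    have := (lintegral_eq_zero_iff hHinf_meas).1 hzero
    filter_upwards [this] with stn hstn
    exact hstn
  · intro hae
    have hzero : ∫⁻ stn, ⨅ K, H K stn ∂μ = 0 := by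
      rw [lintegral_eq_zero_iff hHinf_meas]
      filter_upwards [hae] with stn hstn
      exact hstn
    rw [hlint] at hzero
    rw [ennreal_iInf_prod_eq_zero_iff (fun k => hI_le_one n k)] at hzero
    rw [ennreal_tendsto_zero_iff_toReal
      (fun K => ENNReal.prod_ne_top (fun k _ => hI_ne_top n k))] at hzero
    have htr : (fun K => (∏ k ∈ Finset.range K, I n k).toReal)
        = fun K => ∏ k ∈ Finset.range K, (I n k).toReal := by
      funext K; exact ENNReal.toReal_prod _ _
    rw [htr] at hzero
    rw [prod_tendsto_zero_iff
      (fun k => ENNReal.toReal_pos (hI_pos n k) (hI_ne_top n k))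
      (fun k => ENNReal.toReal_le_of_le_ofReal zero_le_one
        (by simpa using hI_le_one n k))] at hzero
    intro hcon
    apply hzero
    have : (fun k : ℕ => 1 - pgf (PNs (n + k + 1))
        ((PRs (n + k + 1) (Set.Iio ((k : ℝ) + 1))).toReal))
        = fun k => 1 - (I n k).toReal := by
      funext k; rw [hIReal n k]
    rw [this] at hcon
    exact hcon

end
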